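/- arXiv:1605.02353 — 2 statements merged into one kernel-verified Lean document; each statement's English description precedes it below -/
import Mathlib

section
/- If multi-edges e and e' incident on vertex v (with endpoints v,u and v,z, u ≠ z) are 1/ρ-bounded with respect to L, meaning w(e)·b_{v,u}ᵀ L⁺ b_{v,u} ≤ 1/ρ and w(e')·b_{v,z}ᵀ L⁺ b_{v,z} ≤ 1/ρ, then (w(e)w(e')/(w(e)+w(e'))) · b_{u,z}ᵀ L⁺ b_{u,z} ≤ 1/ρ; i.e., the clique edge formed from e and e' with weight w(e)w(e')/(w(e)+w(e')) is 1/ρ-bounded with respect to L. -/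
open Matrix

/-- The pair-vector `b_{u,v} = e_v - e_u`. -/
def pairVec {V : Type*} [DecidableEq V] (u v : V) : V → ℝ :=
  fun i => (if i = v then 1 else 0) - (if i = u then 1 else 0)

section Aux

variable {V : Type*} [Fintype V] [DecidableEq V]

lemma pairVec_dot (a b : V) (x : V → ℝ) : pairVec a b ⬝ᵥ x = x b - x a := by
  simp [pairVec, dotProduct, sub_mul, Finset.sum_sub_distrib, Finset.sum_ite_eq']

lemma dot_pairVec (a b : V) (x : V → ℝ) : x ⬝ᵥ pairVec a b = x b - x a := by
  simp [pairVec, dotProduct, mul_sub, Finset.sum_sub_distrib, Finset.sum_ite_eq]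

lemma pairVec_sum (a b : V) (hab : a ≠ b) : ∑ i, pairVec a b i = 0 := by
  simp [pairVec, Finset.sum_sub_distrib, Finset.sum_ite_eq']

lemma pairVec_split (u v z : V) : pairVec u z = pairVec v z - pairVec v u := by
  funext i
  simp only [pairVec, Pi.sub_apply]
  ring

variable {E : Type*} [Fintype E] (ends : E → V × V) (w : E → ℝ)

private abbrev bvec (e : E) : V → ℝ := pairVec (ends e).1 (ends e).2

lemma lap_mulVec (x : V → ℝ) (i : V) :
    ((∑ e, w e • Matrix.vecMulVec (bvec ends e) (bvec ends e)) *ᵥ x) i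
      = ∑ e, w e * (bvec ends e ⬝ᵥ x) * bvec ends e i := by
  simp only [Matrix.mulVec, dotProduct, Matrix.sum_apply, Matrix.smul_apply,
    vecMulVec_apply, smul_eq_mul, Finset.sum_mul]
  rw [Finset.sum_comm]
  refine Finset.sum_congr rfl fun e _ => ?_
  rw [Finset.mul_sum, Finset.sum_mul]
  refine Finset.sum_congr rfl fun j _ => ?_
  ring

lemma dot_lap_mulVec (x : V → ℝ) :
    x ⬝ᵥ ((∑ e, w e • Matrix.vecMulVec (bvec ends e) (bvec ends e)) *ᵥ x)
      = ∑ e, w e * (bvec ends e ⬝ᵥ x) ^ 2 := by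
  have h1 : x ⬝ᵥ ((∑ e, w e • Matrix.vecMulVec (bvec ends e) (bvec ends e)) *ᵥ x)
      = ∑ i, ∑ e, x i * (w e * (bvec ends e ⬝ᵥ x) * bvec ends e i) := by
    simp only [dotProduct, lap_mulVec, Finset.mul_sum]
  rw [h1, Finset.sum_comm]
  refine Finset.sum_congr rfl fun e _ => ?_
  have hD : ∑ i, x i * (w e * (bvec ends e ⬝ᵥ x) * bvec ends e i)
      = w e * (bvec ends e ⬝ᵥ x) * ∑ i, bvec ends e i * x i := by
    rw [Finset.mul_sum]
    exact Finset.sum_congr rfl fun i _ => by ring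
  rw [hD]
  have hbd : (bvec ends e ⬝ᵥ x) = ∑ i, bvec ends e i * x i := rfl
  rw [← hbd]
  ring

/-- Kernel of the Laplacian consists of constants. -/
lemma lap_ker_const (hw : ∀ e, 0 < w e)
    (hconn : ∀ a b : V, Relation.ReflTransGen
      (fun x y => ∃ e, ends e = (x, y) ∨ ends e = (y, x)) a b)
    (x : V → ℝ)
    (hx : (∑ e, w e • Matrix.vecMulVec (bvec ends e) (bvec ends e)) *ᵥ x = 0) :
    ∀ a b : V, x a = x b := by
  have hq : ∑ e, w e * (bvec ends e ⬝ᵥ x) ^ 2 = 0 := by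
    rw [← dot_lap_mulVec, hx, dotProduct_zero]
  have hterm : ∀ e ∈ Finset.univ, w e * (bvec ends e ⬝ᵥ x) ^ 2 = 0 := by
    rw [← Finset.sum_eq_zero_iff_of_nonneg]
    · exact hq
    · intro e _
      exact mul_nonneg (hw e).le (sq_nonneg _)
  have hedge : ∀ e : E, x (ends e).1 = x (ends e).2 := by
    intro e
    have h0 := hterm e (Finset.mem_univ e)
    have h1 : (bvec ends e ⬝ᵥ x) = 0 := by
      rcases mul_eq_zero.1 h0 with h | h
      · exact absurd h (hw e).ne'
      · exact pow_eq_zero_iff (by norm_num) |>.1 h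
    rw [pairVec_dot] at h1
    linarith
  intro a b
  induction hconn a b with
  | refl => rfl
  | tail _ hrel ih =>
    obtain ⟨e, he | he⟩ := hrel
    · rw [ih]
      have := hedge e
      rw [he] at this
      exact this
    · rw [ih]
      have := hedge e
      rw [he] at this
      exact this.symm

end Aux

section Main

variable {V E : Type*} [Fintype V] [Fintype E] [DecidableEq V]

/-- Maximum principle: the potential `φ` with `L φ = pairVec p q` attains its minimum at `p`. -/
lemma min_at_source (ends : E → V × V) (w : E → ℝ) (hw : ∀ e, 0 < w e)
    (hconn : ∀ a b : V, Relation.ReflTransGen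
      (fun x y => ∃ e, ends e = (x, y) ∨ ends e = (y, x)) a b)
    (φ : V → ℝ) (p q : V)
    (hφ : (∑ e, w e • Matrix.vecMulVec (bvec ends e) (bvec ends e)) *ᵥ φ = pairVec p q) :
    ∀ i, φ p ≤ φ i := by
  obtain ⟨i0, -, hmin⟩ := Finset.exists_min_image Finset.univ φ ⟨p, Finset.mem_univ p⟩
  have hmin' : ∀ i, φ i0 ≤ φ i := fun i => hmin i (Finset.mem_univ i)
  set m := φ i0 with hm
  set S : Finset V := Finset.univ.filter (fun i => φ i = m) with hS
  have hmemS : ∀ i, i ∈ S ↔ φ i = m := by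
    intro i; simp [hS]
  suffices hp : φ p = m by
    intro i; rw [hp]; exact hmin' i
  by_contra hp
  have hpS : p ∉ S := fun h => hp ((hmemS p).1 h)
  -- sum of L φ over S
  have hsum1 : ∑ i ∈ S, ((∑ e, w e • Matrix.vecMulVec (bvec ends e) (bvec ends e)) *ᵥ φ) i
      = ∑ e, w e * (bvec ends e ⬝ᵥ φ) *
          ((if (ends e).2 ∈ S then (1:ℝ) else 0) - (if (ends e).1 ∈ S then (1:ℝ) else 0)) := by
    simp only [lap_mulVec]
    rw [Finset.sum_comm]
    refine Finset.sum_congr rfl fun e _ => ?_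
    rw [← Finset.mul_sum]
    congr 1
    simp [pairVec, Finset.sum_sub_distrib, Finset.sum_ite_eq']
  have hsum2 : ∑ i ∈ S, pairVec p q i = (if q ∈ S then (1:ℝ) else 0) := by
    simp [pairVec, Finset.sum_sub_distrib, Finset.sum_ite_eq', hpS]
  -- each edge term is nonpositive
  have hterm_nonpos : ∀ e : E, w e * (bvec ends e ⬝ᵥ φ) *
      ((if (ends e).2 ∈ S then (1:ℝ) else 0) - (if (ends e).1 ∈ S then (1:ℝ) else 0)) ≤ 0 := by
    intro e
    have hwe := (hw e).le
    rw [pairVec_dot]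
    by_cases h1 : (ends e).1 ∈ S <;> by_cases h2 : (ends e).2 ∈ S <;>
      simp only [h1, h2, if_true, if_false]
    · have e1 := (hmemS _).1 h1
      have e2 := (hmemS _).1 h2
      rw [e1, e2]; simp
    · have e1 := (hmemS _).1 h1
      have e2 := hmin' (ends e).2
      rw [e1]
      nlinarith
    · have e2 := (hmemS _).1 h2
      have e1 := hmin' (ends e).1
      rw [e2]
      nlinarith
    · simp
  have htot : ∑ e, w e * (bvec ends e ⬝ᵥ φ) *
      ((if (ends e).2 ∈ S then (1:ℝ) else 0) - (if (ends e).1 ∈ S then (1:ℝ) else 0))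
      = (if q ∈ S then (1:ℝ) else 0) := by
    rw [← hsum1, hφ, hsum2]
  have htot_le : (if q ∈ S then (1:ℝ) else 0) ≤ 0 := by
    rw [← htot]
    exact Finset.sum_nonpos fun e _ => hterm_nonpos e
  have hqS : (if q ∈ S then (1:ℝ) else 0) = 0 := by
    by_cases h : q ∈ S <;> simp [h] at htot_le ⊢; linarith
  have hzero : ∀ e ∈ Finset.univ, w e * (bvec ends e ⬝ᵥ φ) *
      ((if (ends e).2 ∈ S then (1:ℝ) else 0) - (if (ends e).1 ∈ S then (1:ℝ) else 0)) = 0 := by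
    rw [← Finset.sum_eq_zero_iff_of_nonpos (fun e _ => hterm_nonpos e)]
    rw [htot, hqS]
  -- adjacency preserves membership in S
  have hadj : ∀ e : E, ((ends e).1 ∈ S ↔ (ends e).2 ∈ S) := by
    intro e
    have h0 := hzero e (Finset.mem_univ e)
    rw [pairVec_dot] at h0
    have hwne := (hw e).ne'
    constructor
    · intro h1
      by_contra h2
      simp only [h1, h2, if_true, if_false] at h0
      have e1 := (hmemS _).1 h1
      have : φ (ends e).2 = m := by
        rw [e1] at h0
        have := mul_eq_zero.1 h0
        rcases this with h | h
        · rcases mul_eq_zero.1 h with h' | h'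
          · exact absurd h' hwne
          · linarith
        · linarith
      exact h2 ((hmemS _).2 this)
    · intro h2
      by_contra h1
      simp only [h1, h2, if_true, if_false] at h0
      have e2 := (hmemS _).1 h2
      have : φ (ends e).1 = m := by
        rw [e2] at h0
        have := mul_eq_zero.1 h0
        rcases this with h | h
        · rcases mul_eq_zero.1 h with h' | h'
          · exact absurd h' hwne
          · linarith
        · linarith
      exact h1 ((hmemS _).2 this)
  -- connectivity: i0 ∈ S hence p ∈ S, contradiction
  have hi0 : i0 ∈ S := (hmemS i0).2 rfl
  have hclosed : ∀ x y : V, Relation.ReflTransGen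
      (fun x y => ∃ e, ends e = (x, y) ∨ ends e = (y, x)) x y → x ∈ S → y ∈ S := by
    intro x y h
    induction h with
    | refl => exact id
    | tail _ hrel ih =>
      intro hx
      obtain ⟨e, he | he⟩ := hrel
      · have := hadj e
        rw [he] at this
        exact this.1 (ih hx)
      · have := hadj e
        rw [he] at this
        exact this.2 (ih hx)
  exact hpS (hclosed i0 p (hconn i0 p) hi0)

end Main

/-- If multi-edges `e, e'` incident on `v` (with endpoints `v,u` and
`v,z`, `u ≠ z`), having weights `we, we' > 0`, are `1/ρ`-bounded w.r.t. the Laplacian `L`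
of a connected weighted multigraph, i.e. `we • b_{v,u}ᵀ L⁺ b_{v,u} ≤ 1/ρ` and
`we' • b_{v,z}ᵀ L⁺ b_{v,z} ≤ 1/ρ`, then the clique edge formed from `e` and `e'`, with
weight `we·we'/(we+we')`, is `1/ρ`-bounded w.r.t. `L`:
`(we·we'/(we+we')) • b_{u,z}ᵀ L⁺ b_{u,z} ≤ 1/ρ`. -/
theorem clique_edge_leverage_bound
    {V E : Type*} [Fintype V] [Fintype E] [DecidableEq V]
    (ends : E → V × V) (w : E → ℝ) (hw : ∀ e, 0 < w e)
    (hconn : ∀ a b : V, Relation.ReflTransGen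
      (fun x y => ∃ e, ends e = (x, y) ∨ ends e = (y, x)) a b)
    (L : Matrix V V ℝ)
    (hL : L = ∑ e, w e • Matrix.vecMulVec
      (pairVec (ends e).1 (ends e).2) (pairVec (ends e).1 (ends e).2))
    (Lp : Matrix V V ℝ)
    (hLp1 : L * Lp * L = L) (hLp2 : Lp * L * Lp = Lp)
    (hLp3 : (L * Lp)ᵀ = L * Lp) (hLp4 : (Lp * L)ᵀ = Lp * L)
    (u v z : V) (huv : u ≠ v) (hvz : v ≠ z) (huz : u ≠ z)
    (we we' ρ : ℝ) (hwe : 0 < we) (hwe' : 0 < we') (hρ : 0 < ρ)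
    (hbound1 : we * (pairVec v u ⬝ᵥ Lp.mulVec (pairVec v u)) ≤ 1 / ρ)
    (hbound2 : we' * (pairVec v z ⬝ᵥ Lp.mulVec (pairVec v z)) ≤ 1 / ρ) :
    (we * we' / (we + we')) * (pairVec u z ⬝ᵥ Lp.mulVec (pairVec u z)) ≤ 1 / ρ := by
  -- L is symmetric
  have hsym : Lᵀ = L := by
    rw [hL, Matrix.transpose_sum]
    refine Finset.sum_congr rfl fun e _ => ?_
    rw [Matrix.transpose_smul]
    congr 1
    ext i j
    simp [Matrix.transpose_apply, vecMulVec_apply, mul_comm]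
  -- projection property: (L * Lp) *ᵥ b = b for b summing to zero
  have hproj : ∀ b : V → ℝ, (∑ i, b i = 0) → (L * Lp) *ᵥ b = b := by
    intro b hb
    set M : Matrix V V ℝ := 1 - L * Lp with hM
    have hML : M * L = 0 := by
      rw [hM, Matrix.sub_mul, Matrix.one_mul, hLp1, sub_self]
    have hMt : Mᵀ = M := by
      rw [hM, Matrix.transpose_sub, Matrix.transpose_one, hLp3]
    have hLMt : L * Mᵀ = 0 := by
      rw [hMt]
      have := congrArg Matrix.transpose hML
      rw [Matrix.transpose_mul, Matrix.transpose_zero, hsym] at this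
      rw [← hMt]
      exact this
    -- rows of M are constant
    have hrow : ∀ i a b' : V, M i a = M i b' := by
      intro i a b'
      have hLrow : L *ᵥ (fun k => M i k) = 0 := by
        funext j
        have : (L * Mᵀ) j i = 0 := by rw [hLMt]; rfl
        rw [Matrix.mul_apply] at this
        simpa [Matrix.mulVec, dotProduct, Matrix.transpose_apply] using this
      rw [hL] at hLrow
      exact lap_ker_const ends w hw hconn _ hLrow a b'
    have hMb : M *ᵥ b = 0 := by
      funext i
      have : (M *ᵥ b) i = ∑ j, M i v * b j := by
        simp only [Matrix.mulVec, dotProduct]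
        exact Finset.sum_congr rfl fun j _ => by rw [hrow i j v]
      rw [this, ← Finset.mul_sum, hb, mul_zero]
      rfl
    have := congrArg (fun N => N *ᵥ b) hM.symm
    simp only [Matrix.sub_mulVec, Matrix.one_mulVec] at this
    rw [hMb] at this
    funext i
    have := congrFun this i
    simp only [Pi.zero_apply, Pi.sub_apply] at this
    linarith [this]
  -- potentials
  set φ : V → ℝ := Lp *ᵥ pairVec v z with hφdef
  set ψ : V → ℝ := Lp *ᵥ pairVec v u with hψdef
  have hφ : L *ᵥ φ = pairVec v z := by
    rw [hφdef, Matrix.mulVec_mulVec]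
    exact hproj _ (pairVec_sum v z hvz)
  have hψ : L *ᵥ ψ = pairVec v u := by
    rw [hψdef, Matrix.mulVec_mulVec]
    exact hproj _ (pairVec_sum v u (Ne.symm huv))
  have hφmin : ∀ i, φ v ≤ φ i := by
    apply min_at_source ends w hw hconn φ v z
    rw [← hL]; exact hφ
  have hψmin : ∀ i, ψ v ≤ ψ i := by
    apply min_at_source ends w hw hconn ψ v u
    rw [← hL]; exact hψ
  -- cross terms nonneg
  have hc1 : 0 ≤ pairVec v u ⬝ᵥ φ := by
    rw [pairVec_dot]
    linarith [hφmin u]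
  have hc2 : 0 ≤ pairVec v z ⬝ᵥ ψ := by
    rw [pairVec_dot]
    linarith [hψmin z]
  -- expand the quadratic form
  have hsplit : pairVec u z = pairVec v z - pairVec v u := pairVec_split u v z
  have hexp : pairVec u z ⬝ᵥ Lp.mulVec (pairVec u z)
      = pairVec v z ⬝ᵥ φ + pairVec v u ⬝ᵥ ψ - pairVec v z ⬝ᵥ ψ - pairVec v u ⬝ᵥ φ := by
    rw [hsplit]
    rw [Matrix.mulVec_sub, sub_dotProduct, dotProduct_sub, dotProduct_sub]
    rw [← hφdef, ← hψdef]
    ring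
  set a : ℝ := pairVec v u ⬝ᵥ ψ with hadef
  set b : ℝ := pairVec v z ⬝ᵥ φ with hbdef
  have hR : pairVec u z ⬝ᵥ Lp.mulVec (pairVec u z) ≤ a + b := by
    rw [hexp]
    linarith
  -- final arithmetic
  have hk : 0 < we * we' / (we + we') := by positivity
  have hstep : (we * we' / (we + we')) * (pairVec u z ⬝ᵥ Lp.mulVec (pairVec u z))
      ≤ (we * we' / (we + we')) * (a + b) := by
    exact mul_le_mul_of_nonneg_left hR hk.le
  refine hstep.trans ?_
  have hsum : (we * we' / (we + we')) * (a + b)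
      = (we' / (we + we')) * (we * a) + (we / (we + we')) * (we' * b) := by
    have hne : we + we' ≠ 0 := by positivity
    field_simp
  rw [hsum]
  have h1 : (we' / (we + we')) * (we * a) ≤ (we' / (we + we')) * (1 / ρ) := by
    apply mul_le_mul_of_nonneg_left _ (by positivity)
    rw [hadef, hψdef]
    exact hbound1
  have h2 : (we / (we + we')) * (we' * b) ≤ (we / (we + we')) * (1 / ρ) := by
    apply mul_le_mul_of_nonneg_left _ (by positivity)
    rw [hbdef, hφdef]
    exact hbound2
  have h3 : (we' / (we + we')) * (1 / ρ) + (we / (we + we')) * (1 / ρ) = 1 / ρ := by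
    have hne : we + we' ≠ 0 := by positivity
    have h4 : we' / (we + we') + we / (we + we') = 1 := by
      rw [← add_div, add_comm we' we, div_self hne]
    calc (we' / (we + we')) * (1 / ρ) + (we / (we + we')) * (1 / ρ)
        = (we' / (we + we') + we / (we + we')) * (1 / ρ) := by ring
      _ = 1 / ρ := by rw [h4, one_mul]
  linarith
end

section
/- If C is a random positive semidefinite d×d matrix with ‖C‖ ≤ 1/3 almost surely, then log E[exp(C)] ⪯ (6/5) E[C]. -/
open scoped Matrix.Norms.L2Operator

section Aux

variable {d : Type*} [Fintype d] [DecidableEq d]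

lemma aux_exp_scalar {x : ℝ} (h0 : 0 ≤ x) (h1 : x ≤ 1 / 3) :
    Real.exp x ≤ 1 + (6 / 5) * x := by
  have h := Real.exp_bound' h0 (by linarith) (n := 3) (by norm_num)
  simp [Finset.sum_range_succ] at h
  norm_num [Nat.factorial] at h
  nlinarith [sq_nonneg x, mul_nonneg h0 (sub_nonneg.2 h1),
    mul_nonneg (mul_nonneg h0 h0) (sub_nonneg.2 h1)]

lemma aux_psd_smul {M : Matrix d d ℝ} (h : M.PosSemidef) {r : ℝ} (hr : 0 ≤ r) :
    (r • M).PosSemidef := by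
  have hh : (r • M).IsHermitian := by
    rw [Matrix.IsHermitian, Matrix.conjTranspose_smul]
    rw [h.1.eq]
    norm_num
  refine Matrix.PosSemidef.of_dotProduct_mulVec_nonneg hh fun x => ?_
  rw [Matrix.smul_mulVec, dotProduct_smul]
  exact mul_nonneg hr (h.dotProduct_mulVec_nonneg x)

lemma aux_psd_sum {Ω : Type*} (s : Finset Ω) (f : Ω → Matrix d d ℝ)
    (h : ∀ ω ∈ s, (f ω).PosSemidef) : (∑ ω ∈ s, f ω).PosSemidef := by
  classical
  induction s using Finset.induction_on with
  | empty => simpa using Matrix.PosSemidef.zero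
  | insert _ _ hx ih =>
      rw [Finset.sum_insert hx]
      exact (h _ (Finset.mem_insert_self _ _)).add
        (ih fun ω hω => h ω (Finset.mem_insert_of_mem hω))

lemma aux_cfc_psd {A : Matrix d d ℝ} (hA : A.IsHermitian) {f : ℝ → ℝ}
    (hf : ∀ x ∈ spectrum ℝ A, 0 ≤ f x) : (cfc f A).PosSemidef := by
  rw [hA.cfc_eq, Matrix.IsHermitian.cfc, Unitary.conjStarAlgAut_apply, Matrix.star_eq_conjTranspose]
  refine (Matrix.posSemidef_diagonal_iff.mpr fun i => ?_).mul_mul_conjTranspose_same _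
  simpa using hf _ (hA.eigenvalues_mem_spectrum_real i)

end Aux

/-- If `C` is a random positive semidefinite `d × d` matrix (finitely
supported, given by weights `p` on a finite sample space `Ω`) with `‖C‖ ≤ 1/3` almost
surely (spectral norm), then `log E[exp C] ⪯ (6/5) E[C]` in the Loewner order. -/
theorem matrix_mgf_bound_by_first_moment
    {d Ω : Type*} [Fintype d] [DecidableEq d] [Fintype Ω]
    (p : Ω → ℝ) (hp : ∀ ω, 0 ≤ p ω) (hsum : ∑ ω, p ω = 1)
    (C : Ω → Matrix d d ℝ) (hpsd : ∀ ω, (C ω).PosSemidef)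
    (hnorm : ∀ ω, ‖C ω‖ ≤ 1 / 3) :
    ((6 / 5 : ℝ) • (∑ ω, p ω • C ω)
      - cfc Real.log (∑ ω, p ω • NormedSpace.exp (C ω))).PosSemidef := by
  classical
  set B : Matrix d d ℝ := ∑ ω, p ω • C ω with hB
  set A : Matrix d d ℝ := ∑ ω, p ω • NormedSpace.exp (C ω) with hA
  have hherm : ∀ ω, (C ω).IsHermitian := fun ω => (hpsd ω).1
  have hsa : ∀ ω, IsSelfAdjoint (C ω) := fun ω =>
    (hherm ω)
  -- spectrum bounds for C ω
  have hspec0 : ∀ ω, ∀ x ∈ spectrum ℝ (C ω), 0 ≤ x := by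
    intro ω x hx
    rw [(hherm ω).spectrum_real_eq_range_eigenvalues] at hx
    obtain ⟨i, rfl⟩ := hx
    exact (hpsd ω).eigenvalues_nonneg i
  have h1le : ‖(1 : Matrix d d ℝ)‖ ≤ 1 := by
    rw [Matrix.cstar_norm_def, map_one]
    exact ContinuousLinearMap.norm_id_le
  have hspec1 : ∀ ω, ∀ x ∈ spectrum ℝ (C ω), x ≤ 1 / 3 := by
    intro ω x hx
    have h2 := spectrum.norm_le_norm_mul_of_mem hx
    have h3 : ‖C ω‖ * ‖(1 : Matrix d d ℝ)‖ ≤ 1 / 3 := by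
      calc ‖C ω‖ * ‖(1 : Matrix d d ℝ)‖ ≤ ‖C ω‖ * 1 :=
            mul_le_mul_of_nonneg_left h1le (norm_nonneg _)
      _ = ‖C ω‖ := mul_one _
      _ ≤ 1 / 3 := hnorm ω
    calc x ≤ |x| := le_abs_self x
    _ ≤ 1 / 3 := le_trans h2 h3
  have hexp : ∀ ω, NormedSpace.exp (C ω) = cfc Real.exp (C ω) := fun ω =>
    (CFC.real_exp_eq_normedSpace_exp (hsa ω)).symm
  -- per-ω bound: 1 + (6/5) • C ω - exp (C ω) is PSD
  have hD : ∀ ω, ((1 : Matrix d d ℝ) + (6 / 5 : ℝ) • C ω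
      - NormedSpace.exp (C ω)).PosSemidef := by
    intro ω
    have key : cfc (fun x : ℝ => (1 + (6 / 5) * x) - Real.exp x) (C ω)
        = (1 : Matrix d d ℝ) + (6 / 5 : ℝ) • C ω - NormedSpace.exp (C ω) := by
      rw [cfc_sub _ _ _ (by fun_prop) (by fun_prop),
        cfc_add _ _ _ (by fun_prop) (by fun_prop), hexp ω]
      rw [show (fun _ : ℝ => (1 : ℝ)) = fun x : ℝ => 1 from rfl]
      rw [cfc_const_one ℝ (C ω) (hsa ω), cfc_const_mul_id _ _ (hsa ω)]
    rw [← key]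
    refine aux_cfc_psd (hherm ω) fun x hx => ?_
    have := aux_exp_scalar (hspec0 ω x hx) (hspec1 ω x hx)
    linarith
  -- exp (C ω) - 1 is PSD
  have hE : ∀ ω, (NormedSpace.exp (C ω) - 1).PosSemidef := by
    intro ω
    have key : cfc (fun x : ℝ => Real.exp x - 1) (C ω)
        = NormedSpace.exp (C ω) - 1 := by
      rw [cfc_sub _ _ _ (by fun_prop) (by fun_prop), hexp ω, cfc_const_one ℝ (C ω) (hsa ω)]
    rw [← key]
    refine aux_cfc_psd (hherm ω) fun x hx => ?_
    have := Real.exp_pos x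
    have := Real.add_one_le_exp x
    have := hspec0 ω x hx
    linarith
  -- A is positive definite
  have hAsplit : A = (∑ ω, p ω • (NormedSpace.exp (C ω) - 1)) + 1 := by
    rw [hA]
    simp only [smul_sub, Finset.sum_sub_distrib, ← Finset.sum_smul, hsum, one_smul]
    abel
  have hApd : A.PosDef := by
    rw [hAsplit]
    exact Matrix.PosDef.posSemidef_add
      (aux_psd_sum _ _ fun ω _ => aux_psd_smul (hE ω) (hp ω)) Matrix.PosDef.one
  have hAherm : A.IsHermitian := hApd.isHermitian
  have hAsa : IsSelfAdjoint A := hAherm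
  have hApos : ∀ x ∈ spectrum ℝ A, 0 < x := by
    intro x hx
    rw [hAherm.spectrum_real_eq_range_eigenvalues] at hx
    obtain ⟨i, rfl⟩ := hx
    exact hApd.eigenvalues_pos i
  have hlogc : ContinuousOn Real.log (spectrum ℝ A) :=
    Real.continuousOn_log.mono fun x hx => ne_of_gt (hApos x hx)
  -- A - 1 - log A is PSD
  have hM2 : (A - 1 - cfc Real.log A).PosSemidef := by
    have key : cfc (fun x : ℝ => (x - 1) - Real.log x) A
        = A - 1 - cfc Real.log A := by
      rw [cfc_sub _ _ _ (by fun_prop) hlogc,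
        cfc_sub _ _ _ (by fun_prop) (by fun_prop), cfc_id' ℝ A hAsa, cfc_const_one ℝ A hAsa]
    rw [← key]
    refine aux_cfc_psd hAherm fun x hx => ?_
    have := Real.log_le_sub_one_of_pos (hApos x hx)
    linarith
  -- 1 + (6/5) • B - A is PSD
  have hM1 : ((1 : Matrix d d ℝ) + (6 / 5 : ℝ) • B - A).PosSemidef := by
    have key : ∑ ω, p ω • ((1 : Matrix d d ℝ) + (6 / 5 : ℝ) • C ω
        - NormedSpace.exp (C ω))
        = (1 : Matrix d d ℝ) + (6 / 5 : ℝ) • B - A := by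
      rw [hB, hA, Finset.smul_sum]
      simp only [smul_sub, smul_add, Finset.sum_sub_distrib, Finset.sum_add_distrib,
        ← Finset.sum_smul, hsum, one_smul, smul_comm _ (6 / 5 : ℝ)]
    rw [← key]
    exact aux_psd_sum _ _ fun ω _ => aux_psd_smul (hD ω) (hp ω)
  have := hM1.add hM2
  have heq : ((1 : Matrix d d ℝ) + (6 / 5 : ℝ) • B - A) + (A - 1 - cfc Real.log A)
      = (6 / 5 : ℝ) • B - cfc Real.log A := by abel
  rwa [heq] at this
end
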